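/- Lemma 4.7 (rank of the projective billiard reflection map, planar analytic core). Let B ∈ ℂ², and let v, τ ∈ ℂ² be nonzero vectors that are not proportional (the field and tangent directions of a projective billiard vertex at B). Let a₁ : U₁ → ℂ² and a₃ : U₃ → ℂ² be complex analytic maps on open sets U₁, U₃ ⊆ ℂ with a₁′ and a₃′ nowhere vanishing, and let s₀ ∈ U₁, t₀ ∈ U₃ be such that: a₁(s₀) ≠ B and a₃(t₀) ≠ B; the vectors a₁(s₀) − B and a₃(t₀) − B are symmetric with respect to (v, τ); a₁(s₀) − B ∉ ℂ∙a₁′(s₀) (the line through a₁(s₀) and B is transverse to the curve a₁ at s₀); and a₃(t₀) − B ∉ ℂ∙a₃′(t₀) (the line through a₃(t₀) and B is transverse to the curve a₃ at t₀). Then there exist an open neighborhood W ⊆ U₁ of s₀ and a complex analytic map g : W → U₃ with g(s₀) = t₀ such that for every s ∈ W the vectors a₁(s) − B and a₃(g(s)) − B are symmetric with respect to (v, τ), and moreover g′(s₀) ≠ 0. -/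

import Mathlib

/-- Two nonzero vectors `u`, `w` of the plane are symmetric with respect to the pair
`(v, τ)` (field direction, tangent direction): there are nonzero scalars `p`, `q` with
`p • u + q • w` on the line spanned by `τ` and `p • u - q • w` on the line spanned by `v`. -/
def PlaneSym (𝕜 : Type*) [Field 𝕜] (v τ u w : 𝕜 × 𝕜) : Prop :=
  ∃ p q : 𝕜, p ≠ 0 ∧ q ≠ 0 ∧ p • u + q • w ∈ Submodule.span 𝕜 {τ} ∧
    p • u - q • w ∈ Submodule.span 𝕜 {v}

noncomputable section

open scoped Topology

/-- 2×2 determinant. -/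
def dt (u w : ℂ × ℂ) : ℂ := u.1 * w.2 - u.2 * w.1

lemma dt_self (u : ℂ × ℂ) : dt u u = 0 := by simp [dt]; ring

lemma dt_smul_left (l : ℂ) (x y : ℂ × ℂ) : dt (l • x) y = l * dt x y := by
  simp [dt]; ring

lemma eq_smul_of_dt_eq_zero {w z : ℂ × ℂ} (hz : z ≠ 0) (h : dt w z = 0) :
    ∃ μ : ℂ, w = μ • z := by
  rcases eq_or_ne z.1 0 with h1 | h1
  · have h2 : z.2 ≠ 0 := by
      intro h2; exact hz (Prod.ext h1 h2)
    refine ⟨w.2 / z.2, Prod.ext ?_ ?_⟩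
    · have : w.1 * z.2 = 0 := by simpa [dt, h1] using h
      have hw1 : w.1 = 0 := by
        rcases mul_eq_zero.1 this with h' | h'
        · exact h'
        · exact absurd h' h2
      simp [hw1, h1, Prod.smul_fst]
    · simp [Prod.smul_snd, smul_eq_mul]
      field_simp
  · refine ⟨w.1 / z.1, Prod.ext ?_ ?_⟩
    · simp [Prod.smul_fst, smul_eq_mul]
      field_simp
    · simp [Prod.smul_snd, smul_eq_mul]
      have : w.1 * z.2 - w.2 * z.1 = 0 := h
      field_simp
      linear_combination -this

/-- The projective reflection with respect to the frame `(v, τ)`: the linear map sending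
`v ↦ -v` and `τ ↦ τ`, written in coordinates. -/
def refl2 (v τ u : ℂ × ℂ) : ℂ × ℂ :=
  ((dt v τ)⁻¹ * (dt v u * τ.1 - dt u τ * v.1),
   (dt v τ)⁻¹ * (dt v u * τ.2 - dt u τ * v.2))

lemma dt_refl2_refl2 {v τ : ℂ × ℂ} (hd : dt v τ ≠ 0) (x y : ℂ × ℂ) :
    dt (refl2 v τ x) (refl2 v τ y) = -dt x y := by
  simp only [refl2, dt] at *
  field_simp
  ring

lemma planeSym_of_refl2 {v τ u w : ℂ × ℂ} (hd : dt v τ ≠ 0) {μ : ℂ} (hμ : μ ≠ 0)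
    (hw : w = μ • refl2 v τ u) : PlaneSym ℂ v τ u w := by
  refine ⟨μ, 1, hμ, one_ne_zero, ?_, ?_⟩
  · refine Submodule.mem_span_singleton.2 ⟨μ * ((dt v τ)⁻¹ * (2 * dt v u)), ?_⟩
    rw [hw]
    refine Prod.ext ?_ ?_ <;>
    · simp only [refl2, dt, Prod.smul_fst, Prod.smul_snd, Prod.fst_add, Prod.snd_add,
        smul_eq_mul] at *
      field_simp
      ring
  · refine Submodule.mem_span_singleton.2 ⟨μ * ((dt v τ)⁻¹ * (2 * dt u τ)), ?_⟩
    rw [hw]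
    refine Prod.ext ?_ ?_ <;>
    · simp only [refl2, dt, Prod.smul_fst, Prod.smul_snd, Prod.fst_sub, Prod.snd_sub,
        smul_eq_mul] at *
      field_simp
      ring

lemma planeSym_elim {v τ u w : ℂ × ℂ} (hd : dt v τ ≠ 0) (hw : w ≠ 0)
    (h : PlaneSym ℂ v τ u w) : ∃ μ : ℂ, μ ≠ 0 ∧ w = μ • refl2 v τ u := by
  obtain ⟨p, q, hp, hq, hτm, hvm⟩ := h
  obtain ⟨β, hβ⟩ := Submodule.mem_span_singleton.1 hτm
  obtain ⟨α, hα⟩ := Submodule.mem_span_singleton.1 hvm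
  have hβ1 : β * τ.1 = p * u.1 + q * w.1 := congrArg Prod.fst hβ
  have hβ2 : β * τ.2 = p * u.2 + q * w.2 := congrArg Prod.snd hβ
  have hα1 : α * v.1 = p * u.1 - q * w.1 := congrArg Prod.fst hα
  have hα2 : α * v.2 = p * u.2 - q * w.2 := congrArg Prod.snd hα
  have hdd : v.1 * τ.2 - v.2 * τ.1 ≠ 0 := hd
  have h3 : p * (v.1 * u.2 - v.2 * u.1) = β * (v.1 * τ.2 - v.2 * τ.1) / 2 := by
    linear_combination (-(v.1) / 2) * hβ2 + (-(v.1) / 2) * hα2 + (v.2 / 2) * hβ1 +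
      (v.2 / 2) * hα1
  have h4 : p * (u.1 * τ.2 - u.2 * τ.1) = α * (v.1 * τ.2 - v.2 * τ.1) / 2 := by
    linear_combination (-(τ.2) / 2) * hβ1 + (-(τ.2) / 2) * hα1 + (τ.1 / 2) * hβ2 +
      (τ.1 / 2) * hα2
  have h5 : q * w.1 = (β * τ.1 - α * v.1) / 2 := by
    linear_combination (-(1:ℂ) / 2) * hβ1 + ((1:ℂ) / 2) * hα1
  have h6 : q * w.2 = (β * τ.2 - α * v.2) / 2 := by
    linear_combination (-(1:ℂ) / 2) * hβ2 + ((1:ℂ) / 2) * hα2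
  refine ⟨p / q, div_ne_zero hp hq, Prod.ext ?_ ?_⟩
  · have key : q * w.1 * (v.1 * τ.2 - v.2 * τ.1) =
        p * ((v.1 * u.2 - v.2 * u.1) * τ.1 - (u.1 * τ.2 - u.2 * τ.1) * v.1) := by
      linear_combination (v.1 * τ.2 - v.2 * τ.1) * h5 + (-(τ.1)) * h3 + v.1 * h4
    simp only [refl2, dt, Prod.smul_fst, smul_eq_mul]
    field_simp
    linear_combination key
  · have key : q * w.2 * (v.1 * τ.2 - v.2 * τ.1) =
        p * ((v.1 * u.2 - v.2 * u.1) * τ.2 - (u.1 * τ.2 - u.2 * τ.1) * v.2) := by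
      linear_combination (v.1 * τ.2 - v.2 * τ.1) * h6 + (-(τ.2)) * h3 + v.2 * h4
    simp only [refl2, dt, Prod.smul_snd, smul_eq_mul]
    field_simp
    linear_combination key

lemma dt_parallel_of_cross {c e w z : ℂ × ℂ}
    (h : dt c w * dt z e = dt c z * dt w e) : dt c e * dt w z = 0 := by
  simp only [dt] at *
  linear_combination -h

/-- derivative of `s ↦ dt y (f s - B)` -/
lemma hasDerivAt_dt_right {y B : ℂ × ℂ} {f : ℂ → ℂ × ℂ} {f' : ℂ × ℂ} {x : ℂ}
    (hf : HasDerivAt f f' x) :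
    HasDerivAt (fun s => dt y (f s - B)) (dt y f') x := by
  have h1 : HasDerivAt (fun s => (f s).1) f'.1 x :=
    (ContinuousLinearMap.fst ℂ ℂ ℂ).hasFDerivAt.comp_hasDerivAt x hf
  have h2 : HasDerivAt (fun s => (f s).2) f'.2 x :=
    (ContinuousLinearMap.snd ℂ ℂ ℂ).hasFDerivAt.comp_hasDerivAt x hf
  have : HasDerivAt (fun s => y.1 * ((f s).2 - B.2) - y.2 * ((f s).1 - B.1))
      (y.1 * f'.2 - y.2 * f'.1) x :=
    ((h2.sub_const _).const_mul _).sub ((h1.sub_const _).const_mul _)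
  simpa [dt] using this

lemma hasDerivAt_dt_left {y B : ℂ × ℂ} {f : ℂ → ℂ × ℂ} {f' : ℂ × ℂ} {x : ℂ}
    (hf : HasDerivAt f f' x) :
    HasDerivAt (fun s => dt (f s - B) y) (dt f' y) x := by
  have h1 : HasDerivAt (fun s => (f s).1) f'.1 x :=
    (ContinuousLinearMap.fst ℂ ℂ ℂ).hasFDerivAt.comp_hasDerivAt x hf
  have h2 : HasDerivAt (fun s => (f s).2) f'.2 x :=
    (ContinuousLinearMap.snd ℂ ℂ ℂ).hasFDerivAt.comp_hasDerivAt x hf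
  have : HasDerivAt (fun s => ((f s).1 - B.1) * y.2 - ((f s).2 - B.2) * y.1)
      (f'.1 * y.2 - f'.2 * y.1) x :=
    ((h1.sub_const _).mul_const _).sub ((h2.sub_const _).mul_const _)
  simpa [dt] using this

lemma analyticAt_dt_right {y B : ℂ × ℂ} {f : ℂ → ℂ × ℂ} {x : ℂ}
    (hf : AnalyticAt ℂ f x) :
    AnalyticAt ℂ (fun s => dt y (f s - B)) x := by
  have h1 : AnalyticAt ℂ (fun s => (f s).1) x :=
    ((ContinuousLinearMap.fst ℂ ℂ ℂ).analyticAt _).comp hf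
  have h2 : AnalyticAt ℂ (fun s => (f s).2) x :=
    ((ContinuousLinearMap.snd ℂ ℂ ℂ).analyticAt _).comp hf
  have : AnalyticAt ℂ (fun s => y.1 * ((f s).2 - B.2) - y.2 * ((f s).1 - B.1)) x :=
    ((analyticAt_const.mul (h2.sub analyticAt_const))).sub
      ((analyticAt_const.mul (h1.sub analyticAt_const)))
  exact this.congr (by filter_upwards with s; simp [dt])

lemma analyticAt_dt_left {y B : ℂ × ℂ} {f : ℂ → ℂ × ℂ} {x : ℂ}
    (hf : AnalyticAt ℂ f x) :
    AnalyticAt ℂ (fun s => dt (f s - B) y) x := by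
  have h1 : AnalyticAt ℂ (fun s => (f s).1) x :=
    ((ContinuousLinearMap.fst ℂ ℂ ℂ).analyticAt _).comp hf
  have h2 : AnalyticAt ℂ (fun s => (f s).2) x :=
    ((ContinuousLinearMap.snd ℂ ℂ ℂ).analyticAt _).comp hf
  have : AnalyticAt ℂ (fun s => ((f s).1 - B.1) * y.2 - ((f s).2 - B.2) * y.1) x :=
    (((h1.sub analyticAt_const)).mul analyticAt_const).sub
      (((h2.sub analyticAt_const)).mul analyticAt_const)
  exact this.congr (by filter_upwards with s; simp [dt])

/-- derivative of reflected chord direction -/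
lemma hasDerivAt_refl2 {v τ B : ℂ × ℂ} {f : ℂ → ℂ × ℂ} {f' : ℂ × ℂ} {x : ℂ}
    (hf : HasDerivAt f f' x) :
    HasDerivAt (fun s => refl2 v τ (f s - B)) (refl2 v τ f') x := by
  have hv := hasDerivAt_dt_right (y := v) (B := B) hf
  have hτ := hasDerivAt_dt_left (y := τ) (B := B) hf
  exact (HasDerivAt.prodMk (((hv.mul_const τ.1).sub (hτ.mul_const v.1)).const_mul _)
    (((hv.mul_const τ.2).sub (hτ.mul_const v.2)).const_mul _))

lemma analyticAt_refl2 {v τ B : ℂ × ℂ} {f : ℂ → ℂ × ℂ} {x : ℂ}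
    (hf : AnalyticAt ℂ f x) :
    AnalyticAt ℂ (fun s => refl2 v τ (f s - B)) x := by
  have hv := analyticAt_dt_right (y := v) (B := B) hf
  have hτ := analyticAt_dt_left (y := τ) (B := B) hf
  exact ((analyticAt_const.mul ((hv.mul analyticAt_const).sub (hτ.mul analyticAt_const))).prod
    (analyticAt_const.mul ((hv.mul analyticAt_const).sub (hτ.mul analyticAt_const))))


/-- **Lemma 4.7** (planar analytic core). The projective billiard reflection map at a fixed
vertex `B`, sending a point of one analytic curve to the point of another analytic curve
obtained by reflecting the chord at `B`, is a well-defined analytic map of nonzero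
derivative near a transversal reflection configuration. -/
theorem billiard_reflection_map_rank_one
    (B v τ : ℂ × ℂ) (hv : v ≠ 0) (hτ : τ ≠ 0)
    (hvτ : v ∉ Submodule.span ℂ {τ})
    (U₁ U₃ : Set ℂ) (hU₁o : IsOpen U₁) (hU₃o : IsOpen U₃)
    (a₁ a₃ : ℂ → ℂ × ℂ)
    (ha₁ : AnalyticOnNhd ℂ a₁ U₁) (ha₃ : AnalyticOnNhd ℂ a₃ U₃)
    (ha₁' : ∀ s ∈ U₁, deriv a₁ s ≠ 0) (ha₃' : ∀ t ∈ U₃, deriv a₃ t ≠ 0)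
    (s₀ : ℂ) (t₀ : ℂ) (hs₀ : s₀ ∈ U₁) (ht₀ : t₀ ∈ U₃)
    (hAB : a₁ s₀ ≠ B) (hCB : a₃ t₀ ≠ B)
    (hsym : PlaneSym ℂ v τ (a₁ s₀ - B) (a₃ t₀ - B))
    (htrans₁ : a₁ s₀ - B ∉ Submodule.span ℂ {deriv a₁ s₀})
    (htrans₃ : a₃ t₀ - B ∉ Submodule.span ℂ {deriv a₃ t₀}) :
    ∃ W : Set ℂ, IsOpen W ∧ s₀ ∈ W ∧ W ⊆ U₁ ∧
      ∃ g : ℂ → ℂ, AnalyticOnNhd ℂ g W ∧ Set.MapsTo g W U₃ ∧ g s₀ = t₀ ∧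
        (∀ s ∈ W, PlaneSym ℂ v τ (a₁ s - B) (a₃ (g s) - B)) ∧
        deriv g s₀ ≠ 0 := by
  classical
  -- basic nondegeneracy facts
  have hd : dt v τ ≠ 0 := by
    intro h
    obtain ⟨μ, hμ⟩ := eq_smul_of_dt_eq_zero hτ h
    exact hvτ (Submodule.mem_span_singleton.2 ⟨μ, hμ.symm⟩)
  set c : ℂ × ℂ := a₃ t₀ - B with hc
  set e : ℂ × ℂ := deriv a₃ t₀ with he
  have hde : dt c e ≠ 0 := by
    intro h
    obtain ⟨μ, hμ⟩ := eq_smul_of_dt_eq_zero (ha₃' t₀ ht₀) h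
    exact htrans₃ (Submodule.mem_span_singleton.2 ⟨μ, hμ.symm⟩)
  have hd1 : dt (a₁ s₀ - B) (deriv a₁ s₀) ≠ 0 := by
    intro h
    obtain ⟨μ, hμ⟩ := eq_smul_of_dt_eq_zero (ha₁' s₀ hs₀) h
    exact htrans₁ (Submodule.mem_span_singleton.2 ⟨μ, hμ.symm⟩)
  -- the reflected direction of the incoming chord
  obtain ⟨l, hl0, hlc⟩ :=
    planeSym_elim hd (sub_ne_zero.2 hCB) hsym
  have hlc2 : c = l • refl2 v τ (a₁ s₀ - B) := hlc
  -- scalar slope functions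
  set Ru : ℂ → ℂ × ℂ := fun s => refl2 v τ (a₁ s - B) with hRu
  set N₁ : ℂ → ℂ := fun s => dt c (Ru s) with hN₁
  set M₁ : ℂ → ℂ := fun s => dt (Ru s) e with hM₁
  set σ : ℂ → ℂ := fun s => N₁ s / M₁ s with hσ
  set N₃ : ℂ → ℂ := fun t => dt c (a₃ t - B) with hN₃
  set M₃ : ℂ → ℂ := fun t => dt (a₃ t - B) e with hM₃
  set φ : ℂ → ℂ := fun t => N₃ t / M₃ t with hφ
  -- values at base points
  have hN₁0 : N₁ s₀ = 0 := by
    show dt c (refl2 v τ (a₁ s₀ - B)) = 0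
    rw [hlc2, dt_smul_left, dt_self, mul_zero]
  have hM₁0 : M₁ s₀ ≠ 0 := by
    intro h
    apply hde
    have h2 : dt c e = l * dt (refl2 v τ (a₁ s₀ - B)) e := by rw [hlc2, dt_smul_left]
    have h3 : dt (refl2 v τ (a₁ s₀ - B)) e = 0 := h
    rw [h2, h3, mul_zero]
  have hN₃0 : N₃ t₀ = 0 := dt_self c
  have hM₃0 : M₃ t₀ ≠ 0 := hde
  have hσ0 : σ s₀ = 0 := by show N₁ s₀ / M₁ s₀ = 0; rw [hN₁0, zero_div]
  have hφ0 : φ t₀ = 0 := by show N₃ t₀ / M₃ t₀ = 0; rw [hN₃0, zero_div]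
  -- analyticity of the slope ingredients
  have hN₁an : ∀ s ∈ U₁, AnalyticAt ℂ N₁ s := by
    intro s hs
    have h1 := analyticAt_dt_right (y := c) (B := 0) (analyticAt_refl2 (v := v) (τ := τ)
      (B := B) (ha₁ s hs))
    simpa using h1
  have hM₁an : ∀ s ∈ U₁, AnalyticAt ℂ M₁ s := by
    intro s hs
    have h1 := analyticAt_dt_left (y := e) (B := 0) (analyticAt_refl2 (v := v) (τ := τ)
      (B := B) (ha₁ s hs))
    simpa using h1
  have hN₃an : ∀ t ∈ U₃, AnalyticAt ℂ N₃ t := fun t ht =>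
    analyticAt_dt_right (ha₃ t ht)
  have hM₃an : ∀ t ∈ U₃, AnalyticAt ℂ M₃ t := fun t ht =>
    analyticAt_dt_left (ha₃ t ht)
  -- open sets where denominators do not vanish
  set V₁ : Set ℂ := U₁ ∩ M₁ ⁻¹' {(0:ℂ)}ᶜ with hV₁
  have hV₁o : IsOpen V₁ := by
    refine ContinuousOn.isOpen_inter_preimage ?_ hU₁o isOpen_compl_singleton
    exact fun s hs => ((hM₁an s hs).continuousAt).continuousWithinAt
  have hs₀V₁ : s₀ ∈ V₁ := ⟨hs₀, hM₁0⟩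
  set V₃ : Set ℂ := U₃ ∩ M₃ ⁻¹' {(0:ℂ)}ᶜ with hV₃
  have hV₃o : IsOpen V₃ := by
    refine ContinuousOn.isOpen_inter_preimage ?_ hU₃o isOpen_compl_singleton
    exact fun t ht => ((hM₃an t ht).continuousAt).continuousWithinAt
  have ht₀V₃ : t₀ ∈ V₃ := ⟨ht₀, hM₃0⟩
  have hσan : ∀ s ∈ V₁, AnalyticAt ℂ σ s := fun s hs =>
    (hN₁an s hs.1).div (hM₁an s hs.1) hs.2
  have hφan : AnalyticOnNhd ℂ φ V₃ := fun t ht =>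
    (hN₃an t ht.1).div (hM₃an t ht.1) ht.2
  -- derivative of φ at t₀
  have ha₃d : HasDerivAt a₃ e t₀ := (ha₃ t₀ ht₀).differentiableAt.hasDerivAt
  have hN₃d : HasDerivAt N₃ (dt c e) t₀ := hasDerivAt_dt_right ha₃d
  have hM₃d : HasDerivAt M₃ (dt e e) t₀ := hasDerivAt_dt_left ha₃d
  have hφd : HasDerivAt φ ((dt c e * M₃ t₀ - N₃ t₀ * dt e e) / M₃ t₀ ^ 2) t₀ :=
    hN₃d.div hM₃d hM₃0
  set φd : ℂ := (dt c e * M₃ t₀ - N₃ t₀ * dt e e) / M₃ t₀ ^ 2 with hφdv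
  have hφd0 : φd ≠ 0 := by
    rw [hφdv, hN₃0]
    simp only [zero_mul, sub_zero]
    exact div_ne_zero (mul_ne_zero hde hM₃0) (pow_ne_zero _ hM₃0)
  -- derivative of σ at s₀
  have ha₁d : HasDerivAt a₁ (deriv a₁ s₀) s₀ := (ha₁ s₀ hs₀).differentiableAt.hasDerivAt
  have hRud : HasDerivAt Ru (refl2 v τ (deriv a₁ s₀)) s₀ := hasDerivAt_refl2 ha₁d
  have hN₁d : HasDerivAt N₁ (dt c (refl2 v τ (deriv a₁ s₀))) s₀ := by
    have h1 : HasDerivAt (fun s => dt c (Ru s - 0)) (dt c (refl2 v τ (deriv a₁ s₀))) s₀ :=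
      hasDerivAt_dt_right hRud
    simpa using h1
  have hM₁d : HasDerivAt M₁ (dt (refl2 v τ (deriv a₁ s₀)) e) s₀ := by
    have h1 : HasDerivAt (fun s => dt (Ru s - 0) e) (dt (refl2 v τ (deriv a₁ s₀)) e) s₀ :=
      hasDerivAt_dt_left hRud
    simpa using h1
  set σd : ℂ := (dt c (refl2 v τ (deriv a₁ s₀)) * M₁ s₀ -
      N₁ s₀ * dt (refl2 v τ (deriv a₁ s₀)) e) / M₁ s₀ ^ 2 with hσdv
  have hσd : HasDerivAt σ σd s₀ := hN₁d.div hM₁d hM₁0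
  have hnum : dt c (refl2 v τ (deriv a₁ s₀)) ≠ 0 := by
    rw [hlc2, dt_smul_left, dt_refl2_refl2 hd]
    exact mul_ne_zero hl0 (neg_ne_zero.2 hd1)
  have hσd0 : σd ≠ 0 := by
    rw [hσdv, hN₁0]
    simp only [zero_mul, sub_zero]
    exact div_ne_zero (mul_ne_zero hnum hM₁0) (pow_ne_zero _ hM₁0)
  -- strict derivative and local inverse of φ
  have hφst : HasStrictDerivAt φ φd t₀ := by
    have h1 : ContDiffAt ℂ 1 φ t₀ := (hφan t₀ ht₀V₃).contDiffAt
    have h2 := h1.hasStrictDerivAt one_ne_zero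
    rwa [hφd.deriv] at h2
  set Φ := HasStrictFDerivAt.toOpenPartialHomeomorph φ (hφst.hasStrictFDerivAt_equiv hφd0) with hΦ
  have hΦcoe : (Φ : ℂ → ℂ) = φ := rfl
  have ht₀src : t₀ ∈ Φ.source :=
    HasStrictFDerivAt.mem_toOpenPartialHomeomorph_source (hφst.hasStrictFDerivAt_equiv hφd0)
  have hy₀tgt : φ t₀ ∈ Φ.target := Φ.map_source ht₀src
  have hsymm_y₀ : Φ.symm (φ t₀) = t₀ := Φ.left_inv ht₀src
  -- neighborhood where deriv φ ≠ 0
  have hderφan : AnalyticOnNhd ℂ (deriv φ) V₃ := hφan.deriv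
  set V₃' : Set ℂ := V₃ ∩ (deriv φ) ⁻¹' {(0:ℂ)}ᶜ with hV₃'
  have hV₃'o : IsOpen V₃' := by
    refine ContinuousOn.isOpen_inter_preimage ?_ hV₃o isOpen_compl_singleton
    exact fun t ht => ((hderφan t ht).continuousAt).continuousWithinAt
  have ht₀V₃' : t₀ ∈ V₃' := by
    refine ⟨ht₀V₃, ?_⟩
    simp only [Set.mem_preimage, Set.mem_compl_iff, Set.mem_singleton_iff]
    rw [hφd.deriv]; exact hφd0
  -- the good target set
  set T : Set ℂ := Φ.target ∩ Φ.symm ⁻¹' V₃' with hT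
  have hTo : IsOpen T := Φ.isOpen_inter_preimage_symm hV₃'o
  have hy₀T : φ t₀ ∈ T := ⟨hy₀tgt, by simp [hsymm_y₀, ht₀V₃']⟩
  -- ψ := Φ.symm is analytic on T
  have hψdiff : ∀ y ∈ T, HasDerivAt (Φ.symm) (deriv φ (Φ.symm y))⁻¹ y := by
    intro y hy
    have hyV : Φ.symm y ∈ V₃' := hy.2
    have hφy : HasDerivAt φ (deriv φ (Φ.symm y)) (Φ.symm y) :=
      (hφan _ hyV.1).differentiableAt.hasDerivAt
    have hne : deriv φ (Φ.symm y) ≠ 0 := hyV.2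
    exact Φ.hasDerivAt_symm hy.1 hne (by rwa [hΦcoe])
  have hψan : AnalyticOnNhd ℂ (Φ.symm) T := by
    refine DifferentiableOn.analyticOnNhd (fun y hy => ?_) hTo
    exact ((hψdiff y hy).differentiableAt).differentiableWithinAt
  -- the domain W and the map g
  set W : Set ℂ := V₁ ∩ σ ⁻¹' T with hW
  have hWo : IsOpen W := by
    refine ContinuousOn.isOpen_inter_preimage ?_ hV₁o hTo
    exact fun s hs => ((hσan s hs).continuousAt).continuousWithinAt
  have hs₀W : s₀ ∈ W := ⟨hs₀V₁, by simp only [Set.mem_preimage]; rw [hσ0, ← hφ0]; exact hy₀T⟩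
  set g : ℂ → ℂ := fun s => Φ.symm (σ s) with hg
  have hgV₃' : ∀ s ∈ W, g s ∈ V₃' := fun s hs => hs.2.2
  have hgs₀ : g s₀ = t₀ := by rw [hg]; show Φ.symm (σ s₀) = t₀; rw [hσ0, ← hφ0, hsymm_y₀]
  have hφg : ∀ s ∈ W, φ (g s) = σ s := by
    intro s hs
    have := Φ.right_inv hs.2.1
    rwa [hΦcoe] at this
  refine ⟨W, hWo, hs₀W, fun s hs => hs.1.1, g, ?_, ?_, hgs₀, ?_, ?_⟩
  · -- analyticity of g
    exact fun s hs => (hψan _ hs.2).comp (hσan s hs.1)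
  · -- maps into U₃
    exact fun s hs => (hgV₃' s hs).1.1
  · -- the reflection property
    intro s hs
    have hts : g s ∈ V₃' := hgV₃' s hs
    have hM₃g : M₃ (g s) ≠ 0 := hts.1.2
    have hM₁s : M₁ s ≠ 0 := hs.1.2
    have hcross : N₃ (g s) * M₁ s = N₁ s * M₃ (g s) := by
      have h1 := hφg s hs
      exact (div_eq_div_iff hM₃g hM₁s).1 h1
    have h0 : dt c e * dt (a₃ (g s) - B) (Ru s) = 0 :=
      dt_parallel_of_cross hcross
    have hpar : dt (a₃ (g s) - B) (Ru s) = 0 := by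
      rcases mul_eq_zero.1 h0 with h | h
      · exact absurd h hde
      · exact h
    have hRune : Ru s ≠ 0 := by
      intro h
      apply hM₁s
      show dt (Ru s) e = 0
      rw [h]; simp [dt]
    obtain ⟨μ, hμ⟩ := eq_smul_of_dt_eq_zero hRune hpar
    have hμ0 : μ ≠ 0 := by
      intro h
      apply hM₃g
      show dt (a₃ (g s) - B) e = 0
      rw [hμ, h, zero_smul]; simp [dt]
    exact planeSym_of_refl2 hd hμ0 hμ
  · -- nonzero derivative
    have hψd : HasDerivAt (Φ.symm) φd⁻¹ (σ s₀) := by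
      rw [hσ0, ← hφ0]
      exact Φ.hasDerivAt_symm hy₀tgt hφd0 (by rw [hΦcoe, hsymm_y₀]; exact hφst.hasDerivAt)
    have hgd : HasDerivAt g (φd⁻¹ * σd) s₀ := hψd.comp s₀ hσd
    rw [hgd.deriv]
    exact mul_ne_zero (inv_ne_zero hφd0) hσd0
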